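/- With T = sin α0 cos β E1 + sin α0 sin β E2 + cos α0 E3 and N = −sin β E1 + cos β E2, the binormal is B = T × N = −cos α0 cos β E1 − cos α0 sin β E2 + sin α0 E3, and the geodesic torsion satisfies τ = −ω cos α0 − ℓ/2, where ω = β' + 2my sin α0 cos β − 2mx sin α0 sin β − ℓ cos α0. -/

import Mathlib

noncomputable section

open Real

/-- The quantity `ω = β' + 2my sin α0 cos β − 2mx sin α0 sin β − ℓ cos α0`. -/
def omega (l m α0 : ℝ) (x y β : ℝ → ℝ) (t : ℝ) : ℝ :=
  deriv β t + 2*m*y t*sin α0*cos (β t) - 2*m*x t*sin α0*sin (β t) - l*cos α0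

/-- with `T = sin α0 cos β E1 + sin α0 sin β E2 + cos α0 E3` and
`N = −sin β E1 + cos β E2`, the binormal `B = T × N` (cross product of the
component vectors in the oriented orthonormal frame) is
`B = −cos α0 cos β E1 − cos α0 sin β E2 + sin α0 E3`, and the geodesic torsion
`τ = ⟨∇_T B, N⟩` (with `∇_T B` computed from the Cartan-Vranceanu connection
coefficients) equals `−ω cos α0 − ℓ/2`. -/
theorem binormal_and_torsion (l m α0 : ℝ) (hα : α0 ∈ Set.Ioo (0:ℝ) π)
    (x y β : ℝ → ℝ) (hβ : Differentiable ℝ β) :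
    ∀ t : ℝ,
    let T1 : ℝ → ℝ := fun s => sin α0 * cos (β s)
    let T2 : ℝ → ℝ := fun s => sin α0 * sin (β s)
    let T3 : ℝ → ℝ := fun _ => cos α0
    let N1 : ℝ → ℝ := fun s => -sin (β s)
    let N2 : ℝ → ℝ := fun s => cos (β s)
    let N3 : ℝ → ℝ := fun _ => 0
    -- components of `B = T × N`
    let B1 : ℝ → ℝ := fun s => T2 s * N3 s - T3 s * N2 s
    let B2 : ℝ → ℝ := fun s => T3 s * N1 s - T1 s * N3 s
    let B3 : ℝ → ℝ := fun s => T1 s * N2 s - T2 s * N1 s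
    -- components of `∇_T B` via the Cartan-Vranceanu connection coefficients
    let C1 := deriv B1 t
      + B2 t * (-2*m*y t*T1 t + 2*m*x t*T2 t + (l/2)*T3 t) + B3 t * ((l/2)*T2 t)
    let C2 := deriv B2 t
      + B1 t * (2*m*y t*T1 t - 2*m*x t*T2 t - (l/2)*T3 t) + B3 t * (-(l/2)*T1 t)
    let C3 := deriv B3 t + B1 t * (-(l/2)*T2 t) + B2 t * ((l/2)*T1 t)
    -- the binormal
    (B1 t = -cos α0 * cos (β t) ∧ B2 t = -cos α0 * sin (β t) ∧ B3 t = sin α0) ∧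
    -- the geodesic torsion `τ = ⟨∇_T B, N⟩`
    C1 * N1 t + C2 * N2 t + C3 * N3 t
      = -(omega l m α0 x y β t) * cos α0 - l/2 := by
  intro t
  intro T1 T2 T3 N1 N2 N3 B1 B2 B3 C1 C2 C3
  have hb : HasDerivAt β (deriv β t) t := (hβ t).hasDerivAt
  have h1 : deriv B1 t = deriv β t * (cos α0 * sin (β t)) := by
    have : HasDerivAt B1 (deriv β t * (cos α0 * sin (β t))) t := by
      have hc : HasDerivAt (fun s => cos (β s)) (-sin (β t) * deriv β t) t :=
        (Real.hasDerivAt_cos (β t)).comp t hb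
      have : HasDerivAt (fun s => T2 s * N3 s - T3 s * N2 s)
          (deriv β t * (cos α0 * sin (β t))) t := by
        simp only [T2, T3, N2, N3, mul_zero, zero_sub]
        have := hc.const_mul (cos α0)
        rw [show deriv β t * (cos α0 * sin (β t)) = -(cos α0 * (-sin (β t) * deriv β t)) by ring]
        exact this.neg
      exact this
    exact this.deriv
  have h2 : deriv B2 t = -(deriv β t * (cos α0 * cos (β t))) := by
    have : HasDerivAt B2 (-(deriv β t * (cos α0 * cos (β t)))) t := by
      have hs : HasDerivAt (fun s => Real.sin (β s)) (cos (β t) * deriv β t) t :=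
        (Real.hasDerivAt_sin (β t)).comp t hb
      have : HasDerivAt (fun s => T3 s * N1 s - T1 s * N3 s)
          (-(deriv β t * (cos α0 * cos (β t)))) t := by
        simp only [T1, T3, N1, N3, mul_zero, sub_zero, mul_neg]
        have := (hs.const_mul (cos α0)).neg
        rw [show -(deriv β t * (cos α0 * cos (β t))) = -(cos α0 * (cos (β t) * deriv β t)) by ring]
        exact this
      exact this
    exact this.deriv
  have h3 : deriv B3 t = 0 := by
    have : HasDerivAt B3 0 t := by
      have : B3 = fun _ : ℝ => sin α0 := by
        funext s
        simp only [B3, T1, T2, N1, N2]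
        have := Real.sin_sq_add_cos_sq (β s)
        linear_combination sin α0 * Real.sin_sq_add_cos_sq (β s)
      rw [this]
      exact hasDerivAt_const t (sin α0)
    exact this.deriv
  have hB1 : B1 t = -cos α0 * cos (β t) := by simp only [B1, T2, T3, N2, N3]; ring
  have hB2 : B2 t = -cos α0 * sin (β t) := by simp only [B2, T1, T3, N1, N3]; ring
  have hB3 : B3 t = sin α0 := by
    simp only [B3, T1, T2, N1, N2]
    linear_combination sin α0 * Real.sin_sq_add_cos_sq (β t)
  refine ⟨⟨hB1, hB2, hB3⟩, ?_⟩
  simp only [C1, C2, C3, h1, h2, h3, hB1, hB2, hB3, omega, T1, T2, T3, N1, N2, N3]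
  linear_combination
    (-(deriv β t * cos α0 + cos α0 * (2*m*y t*sin α0*cos (β t) - 2*m*x t*sin α0*sin (β t))
      - (l/2)*cos α0^2 + (l/2)*sin α0^2)) * Real.sin_sq_add_cos_sq (β t)
    - (l/2) * Real.sin_sq_add_cos_sq α0
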